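/- Let Λ be a constant diagonal 3×3 real matrix and D a real constant. Suppose ω, γ : ℝ → ℝ³ are differentiable, define K(t) := Λω(t) − D·⟨ω(t), γ(t)⟩·γ(t), and assume that for all t: K′(t) = K(t) × ω(t) and γ′(t) = γ(t) × ω(t), where × is the cross product on ℝ³. Then the kinetic energy t ↦ ⟨K(t), ω(t)⟩ is constant. -/

import Mathlib

open Matrix

private lemma dot_hasDerivAt {f g : ℝ → Fin 3 → ℝ} {f' g' : Fin 3 → ℝ} {t : ℝ}
    (hf : HasDerivAt f f' t) (hg : HasDerivAt g g' t) :
    HasDerivAt (fun s => f s ⬝ᵥ g s) (f' ⬝ᵥ g t + f t ⬝ᵥ g') t := by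
  have hfi := hasDerivAt_pi.mp hf
  have hgi := hasDerivAt_pi.mp hg
  have := HasDerivAt.fun_sum (u := (Finset.univ : Finset (Fin 3)))
    (fun i _ => (hfi i).mul (hgi i))
  simpa [dotProduct, Finset.sum_add_distrib] using this

/-- The energy integral of the classical Chaplygin sphere: along solutions of
`K̇ = K × ω`, `γ̇ = γ × ω`, with `K = Λω − D⟨ω,γ⟩γ`, the kinetic energy `⟨K,ω⟩`
is constant. -/
theorem chaplygin_sphere_energy_integral
    (Λ : Matrix (Fin 3) (Fin 3) ℝ) (hΛ : Λ.IsDiag) (D : ℝ)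
    (ω γ : ℝ → Fin 3 → ℝ)
    (hωd : Differentiable ℝ ω) (hγd : Differentiable ℝ γ)
    (K : ℝ → Fin 3 → ℝ)
    (hKdef : ∀ t, K t = Λ *ᵥ ω t - (D * (ω t ⬝ᵥ γ t)) • γ t)
    (hK : ∀ t, HasDerivAt K (crossProduct (K t) (ω t)) t)
    (hγ : ∀ t, HasDerivAt γ (crossProduct (γ t) (ω t)) t) :
    ∀ t₁ t₂ : ℝ, K t₁ ⬝ᵥ ω t₁ = K t₂ ⬝ᵥ ω t₂ := by
  have hω : ∀ t, HasDerivAt ω (deriv ω t) t := fun t => (hωd t).hasDerivAt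
  -- derivative of the energy
  have hE : ∀ t, HasDerivAt (fun s => K s ⬝ᵥ ω s)
      (crossProduct (K t) (ω t) ⬝ᵥ ω t + K t ⬝ᵥ deriv ω t) t :=
    fun t => dot_hasDerivAt (hK t) (hω t)
  -- the derivative is zero
  have hzero : ∀ t, crossProduct (K t) (ω t) ⬝ᵥ ω t + K t ⬝ᵥ deriv ω t = 0 := by
    intro t
    set ω' := deriv ω t with hω'def
    set γ' := crossProduct (γ t) (ω t) with hγ'def
    -- derivative of K computed from the definition
    have hK2 : HasDerivAt (fun s => Λ *ᵥ ω s - (D * (ω s ⬝ᵥ γ s)) • γ s)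
        (Λ *ᵥ ω' - ((D * (ω' ⬝ᵥ γ t + ω t ⬝ᵥ γ')) • γ t
          + (D * (ω t ⬝ᵥ γ t)) • γ')) t := by
      apply hasDerivAt_pi.mpr
      intro i
      have hωi := hasDerivAt_pi.mp (hω t)
      have hγi := hasDerivAt_pi.mp (hγ t)
      have h1 : HasDerivAt (fun s => (Λ *ᵥ ω s) i) ((Λ *ᵥ ω') i) t := by
        have := HasDerivAt.fun_sum (u := (Finset.univ : Finset (Fin 3)))
          (fun j _ => (hωi j).const_mul (Λ i j))
        simpa [mulVec, dotProduct] using this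
      have h2 : HasDerivAt (fun s => ω s ⬝ᵥ γ s) (ω' ⬝ᵥ γ t + ω t ⬝ᵥ γ') t :=
        dot_hasDerivAt (hω t) (hγ t)
      have h3 : HasDerivAt (fun s => (D * (ω s ⬝ᵥ γ s)) * γ s i)
          ((D * (ω' ⬝ᵥ γ t + ω t ⬝ᵥ γ')) * γ t i
            + (D * (ω t ⬝ᵥ γ t)) * γ' i) t :=
        (h2.const_mul D).mul (hγi i)
      have := h1.fun_sub h3
      simpa [Pi.sub_apply, Pi.add_apply, Pi.smul_apply, smul_eq_mul] using this
    have hKfun : K = fun s => Λ *ᵥ ω s - (D * (ω s ⬝ᵥ γ s)) • γ s :=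
      funext hKdef
    have heq : crossProduct (K t) (ω t)
        = Λ *ᵥ ω' - ((D * (ω' ⬝ᵥ γ t + ω t ⬝ᵥ γ')) • γ t
          + (D * (ω t ⬝ᵥ γ t)) • γ') := by
      exact (hK t).unique (hKfun ▸ hK2)
    have e0 := congrFun heq 0
    have e1 := congrFun heq 1
    have e2 := congrFun heq 2
    have h01 : Λ 0 1 = 0 := hΛ (by decide)
    have h02 : Λ 0 2 = 0 := hΛ (by decide)
    have h10 : Λ 1 0 = 0 := hΛ (by decide)
    have h12 : Λ 1 2 = 0 := hΛ (by decide)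
    have h20 : Λ 2 0 = 0 := hΛ (by decide)
    have h21 : Λ 2 1 = 0 := hΛ (by decide)
    rw [hKdef t] at e0 e1 e2 ⊢
    simp only [hγ'def, crossProduct, dotProduct, mulVec, Fin.sum_univ_three,
      Pi.sub_apply, Pi.add_apply, Pi.smul_apply, smul_eq_mul,
      LinearMap.mk₂_apply, Matrix.cons_val_zero, Matrix.cons_val_one,
      Matrix.head_cons, Matrix.cons_val_two, Matrix.tail_cons,
      h01, h02, h10, h12, h20, h21] at e0 e1 e2 ⊢
    linear_combination (-(ω t 0)) * e0 + (-(ω t 1)) * e1 + (-(ω t 2)) * e2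
  -- constancy
  have hconst : ∀ t₁ t₂ : ℝ, K t₁ ⬝ᵥ ω t₁ = K t₂ ⬝ᵥ ω t₂ := by
    intro t₁ t₂
    have hdiff : Differentiable ℝ (fun s => K s ⬝ᵥ ω s) :=
      fun t => (hE t).differentiableAt
    have hderiv : ∀ t, deriv (fun s => K s ⬝ᵥ ω s) t = 0 := by
      intro t
      rw [(hE t).deriv, hzero t]
    exact is_const_of_deriv_eq_zero hdiff hderiv t₁ t₂
  exact hconst
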